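/- (Projection noise bound via sparse eigenvalue.) Let F be an n×p matrix, S ⊆ {1,…,p} with |S| = m, and suppose the minimal m-sparse eigenvalue φ_min(m) = min{ (1/n)‖Fα‖₂² : ‖α‖₀ ≤ m, ‖α‖₂ = 1 } is positive. Then for any v ∈ ℝⁿ, ‖P_S v‖₂ ≤ √(m/φ_min(m)) · ‖F'v/√n‖_∞, where P_S is the orthogonal projection onto the span of the columns of F indexed by S. -/

import Mathlib

open Finset RealInnerProductSpace


/-- Projection noise bound via the minimal sparse eigenvalue: for any `S` with
`|S| = m` and `φ_min(m) > 0`, `‖P_S v‖₂ ≤ √(m/φ_min(m)) · ‖F'v/√n‖_∞`, where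
`P_S` is the orthogonal projection onto the span of the columns of `F` in `S`. -/
theorem projection_noise_bound
    (n p m : ℕ) (hn : 0 < n)
    (F : Matrix (Fin n) (Fin p) ℝ)
    (Sset : Finset (Fin p)) (hm : Sset.card = m)
    (col : Fin p → EuclideanSpace ℝ (Fin n)) (hcol : ∀ j i, col j i = F i j)
    (φmin : ℝ)
    (hφ : φmin = sInf {x : ℝ | ∃ α : Fin p → ℝ,
      (Finset.univ.filter (fun j => α j ≠ 0)).card ≤ m ∧ (∑ j, (α j) ^ 2) = 1 ∧
      x = (1 / (n : ℝ)) * ∑ i, (∑ j, F i j * α j) ^ 2})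
    (hφpos : 0 < φmin)
    (v : EuclideanSpace ℝ (Fin n)) :
    ‖(Submodule.orthogonalProjectionOnto (Submodule.span ℝ (col '' (Sset : Set (Fin p)))) v :
        EuclideanSpace ℝ (Fin n))‖
      ≤ Real.sqrt ((m : ℝ) / φmin) * ⨆ j, |(∑ i, F i j * v i) / Real.sqrt n| := by
  classical
  set U := Submodule.span ℝ (col '' (Sset : Set (Fin p))) with hU
  set Pv : EuclideanSpace ℝ (Fin n) :=
    (Submodule.orthogonalProjectionOnto U v : EuclideanSpace ℝ (Fin n)) with hPvdef
  set M := ⨆ j, |(∑ i, F i j * v i) / Real.sqrt n| with hMdef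
  have hnR : (0:ℝ) < n := by exact_mod_cast hn
  have hsn : (0:ℝ) < Real.sqrt n := Real.sqrt_pos.mpr hnR
  have hMnn : 0 ≤ M := Real.iSup_nonneg fun j => abs_nonneg _
  have hMj : ∀ j, |∑ i, F i j * v i| ≤ Real.sqrt n * M := by
    intro j
    have h1 : |(∑ i, F i j * v i) / Real.sqrt n| ≤ M := by
      rw [hMdef]
      exact le_ciSup (f := fun j => |(∑ i, F i j * v i) / Real.sqrt n|)
        (Set.Finite.bddAbove (Set.finite_range _)) j
    rw [abs_div, abs_of_pos hsn, div_le_iff₀ hsn] at h1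
    linarith [h1]
  -- representation of Pv
  have hmem : Pv ∈ U := (Submodule.orthogonalProjectionOnto U v).2
  obtain ⟨l, hl, hrep⟩ := (Finsupp.mem_span_image_iff_linearCombination ℝ).mp hmem
  have hsupp : ∀ j, l j ≠ 0 → j ∈ Sset := by
    intro j hj
    exact hl (Finsupp.mem_support_iff.mpr hj)
  have hPvsum : Pv = ∑ j, l j • col j := by
    rw [← hrep, Finsupp.linearCombination_apply, Finsupp.sum_fintype]
    intro j; simp
  have hPvi : ∀ i, Pv i = ∑ j, F i j * l j := by
    intro i
    have h := map_sum (EuclideanSpace.proj (𝕜 := ℝ) i) (fun j => l j • col j) Finset.univ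
    rw [hPvsum]
    have h2 : (EuclideanSpace.proj (𝕜 := ℝ) i) (∑ j, l j • col j)
        = (∑ j, l j • col j) i := rfl
    rw [← h2, h]
    refine Finset.sum_congr rfl fun j _ => ?_
    have h3 : (EuclideanSpace.proj (𝕜 := ℝ) i) (l j • col j) = l j * col j i := by
      simp
    rw [h3, hcol j i, mul_comm]
  have hnormsq : ‖Pv‖^2 = ∑ i, (∑ j, F i j * l j)^2 := by
    rw [EuclideanSpace.norm_eq, Real.sq_sqrt (by positivity)]
    refine Finset.sum_congr rfl fun i _ => ?_
    rw [Real.norm_eq_abs, sq_abs, hPvi i]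
  have hinner : ⟪Pv, v⟫ = ∑ j, l j * (∑ i, F i j * v i) := by
    rw [PiLp.inner_apply]
    simp only [RCLike.inner_apply, conj_trivial]
    calc ∑ i, v i * Pv i = ∑ i, ∑ j, F i j * l j * v i := by
          refine Finset.sum_congr rfl fun i _ => ?_
          rw [mul_comm, hPvi i, Finset.sum_mul]
      _ = ∑ j, ∑ i, F i j * l j * v i := Finset.sum_comm
      _ = ∑ j, l j * ∑ i, F i j * v i := by
          refine Finset.sum_congr rfl fun j _ => ?_
          rw [Finset.mul_sum]
          exact Finset.sum_congr rfl fun i _ => by ring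
  have hproj : ⟪Pv, v⟫ = ‖Pv‖^2 := by
    have h0 : ⟪v - Pv, Pv⟫ = 0 := U.starProjection_inner_eq_zero v Pv hmem
    rw [inner_sub_left] at h0
    have h1 : ⟪Pv, Pv⟫ = ‖Pv‖^2 := real_inner_self_eq_norm_sq Pv
    have h2 : ⟪Pv, v⟫ = ⟪v, Pv⟫ := real_inner_comm _ _
    linarith
  set s2 := ∑ j, (l j)^2 with hs2def
  have hs2nn : 0 ≤ s2 := by positivity
  by_cases hs2 : s2 = 0
  · -- l = 0, projection is zero
    have hl0 : ∀ j, l j = 0 := by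
      intro j
      have := (Finset.sum_eq_zero_iff_of_nonneg (fun j _ => sq_nonneg (l j))).mp hs2 j
        (Finset.mem_univ j)
      exact pow_eq_zero_iff (two_ne_zero) |>.mp this
    have hsq0 : ‖Pv‖^2 = 0 := by
      rw [hnormsq]
      refine Finset.sum_eq_zero fun i _ => ?_
      simp [hl0]
    have hPv0 : ‖Pv‖ = 0 := by
      have := sq_eq_zero_iff.mp hsq0
      simpa using this
    rw [hPv0]
    exact mul_nonneg (Real.sqrt_nonneg _) hMnn
  · have hs2pos : 0 < s2 := lt_of_le_of_ne hs2nn (Ne.symm hs2)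
    set c := Real.sqrt s2 with hcdef
    have hcpos : 0 < c := Real.sqrt_pos.mpr hs2pos
    have hc2 : c^2 = s2 := Real.sq_sqrt hs2nn
    -- φ bound
    have hbdd : BddBelow {x : ℝ | ∃ α : Fin p → ℝ,
        (Finset.univ.filter (fun j => α j ≠ 0)).card ≤ m ∧ (∑ j, (α j) ^ 2) = 1 ∧
        x = (1 / (n : ℝ)) * ∑ i, (∑ j, F i j * α j) ^ 2} := by
      refine ⟨0, fun x hx => ?_⟩
      obtain ⟨α, _, _, rfl⟩ := hx
      positivity
    have hcard : (Finset.univ.filter (fun j => l j / c ≠ 0)).card ≤ m := by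
      rw [← hm]
      apply Finset.card_le_card
      intro j hj
      rw [Finset.mem_filter] at hj
      apply hsupp
      intro h0
      exact hj.2 (by rw [h0]; simp)
    have hsum1 : (∑ j, (l j / c) ^ 2) = 1 := by
      have h : (∑ j, (l j / c) ^ 2) = s2 / c^2 := by
        rw [hs2def, Finset.sum_div]
        exact Finset.sum_congr rfl fun j _ => by rw [div_pow]
      rw [h, hc2, div_self hs2]
    have hβmem : (1 / (n : ℝ)) * ∑ i, (∑ j, F i j * (l j / c)) ^ 2 ∈
        {x : ℝ | ∃ α : Fin p → ℝ,
        (Finset.univ.filter (fun j => α j ≠ 0)).card ≤ m ∧ (∑ j, (α j) ^ 2) = 1 ∧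
        x = (1 / (n : ℝ)) * ∑ i, (∑ j, F i j * α j) ^ 2} :=
      ⟨fun j => l j / c, hcard, hsum1, rfl⟩
    have hφle : φmin ≤ (1 / (n : ℝ)) * ∑ i, (∑ j, F i j * (l j / c)) ^ 2 := by
      rw [hφ]
      exact csInf_le hbdd hβmem
    have hdivsum : ∑ i, (∑ j, F i j * (l j / c)) ^ 2
        = (∑ i, (∑ j, F i j * l j) ^ 2) / c^2 := by
      rw [Finset.sum_div]
      refine Finset.sum_congr rfl fun i _ => ?_
      rw [← div_pow]
      congr 1
      rw [Finset.sum_div]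
      exact Finset.sum_congr rfl fun j _ => by ring
    have hkey1 : (n : ℝ) * φmin * c^2 ≤ ‖Pv‖^2 := by
      rw [hdivsum] at hφle
      rw [hnormsq]
      have h := mul_le_mul_of_nonneg_left hφle (le_of_lt hnR)
      calc (n:ℝ) * φmin * c^2 ≤ ((n:ℝ) * ((1 / (n : ℝ)) *
              ((∑ i, (∑ j, F i j * l j) ^ 2) / c^2))) * c^2 := by
            exact mul_le_mul_of_nonneg_right h (sq_nonneg c)
        _ = ∑ i, (∑ j, F i j * l j) ^ 2 := by
            have hc0 : c ≠ 0 := ne_of_gt hcpos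
            have hn0 : (n:ℝ) ≠ 0 := ne_of_gt hnR
            field_simp
    -- Cauchy-Schwarz
    have hCS : ∑ j ∈ Sset, |l j| ≤ Real.sqrt m * c := by
      have h := Real.sum_mul_le_sqrt_mul_sqrt Sset (fun j => |l j|) (fun _ => (1:ℝ))
      simp only [mul_one, one_pow] at h
      have hcard1 : ∑ _j ∈ Sset, (1:ℝ) = (m : ℝ) := by
        rw [Finset.sum_const, hm]; simp
      have hle : ∑ j ∈ Sset, |l j|^2 ≤ s2 := by
        have heq : ∑ j ∈ Sset, |l j|^2 = ∑ j ∈ Sset, (l j)^2 :=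
          Finset.sum_congr rfl fun j _ => by rw [sq_abs]
        rw [heq, hs2def]
        exact Finset.sum_le_sum_of_subset_of_nonneg (Finset.subset_univ _)
          (fun j _ _ => sq_nonneg _)
      calc ∑ j ∈ Sset, |l j| ≤ Real.sqrt (∑ j ∈ Sset, |l j|^2) *
              Real.sqrt (∑ _j ∈ Sset, (1:ℝ)) := h
        _ ≤ Real.sqrt s2 * Real.sqrt (m:ℝ) := by
            rw [hcard1]
            exact mul_le_mul_of_nonneg_right (Real.sqrt_le_sqrt hle) (Real.sqrt_nonneg _)
        _ = Real.sqrt m * c := by rw [hcdef, mul_comm]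
    -- main bound
    have hmain : ‖Pv‖^2 ≤ Real.sqrt n * M * (Real.sqrt m * c) := by
      rw [← hproj, hinner]
      have h1 : ∑ j, l j * (∑ i, F i j * v i) = ∑ j ∈ Sset, l j * (∑ i, F i j * v i) := by
        symm
        apply Finset.sum_subset (Finset.subset_univ _)
        intro j _ hj
        have : l j = 0 := by
          by_contra h0
          exact hj (hsupp j h0)
        rw [this, zero_mul]
      rw [h1]
      calc ∑ j ∈ Sset, l j * (∑ i, F i j * v i)
          ≤ ∑ j ∈ Sset, |l j| * (Real.sqrt n * M) := by
            refine Finset.sum_le_sum fun j _ => ?_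
            calc l j * (∑ i, F i j * v i) ≤ |l j * (∑ i, F i j * v i)| := le_abs_self _
              _ = |l j| * |∑ i, F i j * v i| := abs_mul _ _
              _ ≤ |l j| * (Real.sqrt n * M) :=
                  mul_le_mul_of_nonneg_left (hMj j) (abs_nonneg _)
        _ = (Real.sqrt n * M) * ∑ j ∈ Sset, |l j| := by rw [← Finset.sum_mul, mul_comm]
        _ ≤ (Real.sqrt n * M) * (Real.sqrt m * c) :=
            mul_le_mul_of_nonneg_left hCS (by positivity)
    -- conclude
    have hsq_n : Real.sqrt n ^ 2 = (n:ℝ) := Real.sq_sqrt hnR.le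
    have hsq_m : Real.sqrt m ^ 2 = (m:ℝ) := Real.sq_sqrt (by positivity)
    set N := ‖Pv‖ with hNdef
    have hNnn : 0 ≤ N := norm_nonneg _
    by_cases hN0 : N = 0
    · rw [hN0]
      exact mul_nonneg (Real.sqrt_nonneg _) hMnn
    · have hNpos : 0 < N := lt_of_le_of_ne hNnn (Ne.symm hN0)
      have h4 : (N^2)^2 ≤ (Real.sqrt n * M * (Real.sqrt m * c))^2 :=
        pow_le_pow_left₀ (sq_nonneg N) hmain 2
      have hB2 : (Real.sqrt n * M * (Real.sqrt m * c))^2 = (n:ℝ) * m * M^2 * c^2 := by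
        have : (Real.sqrt n * M * (Real.sqrt m * c))^2
            = Real.sqrt n ^2 * M^2 * (Real.sqrt m ^2 * c^2) := by ring
        rw [this, hsq_n, hsq_m]; ring
      have h5 : (n:ℝ) * m * M^2 * c^2 ≤ ((m:ℝ)/φmin) * M^2 * N^2 := by
        have h6 : ((m:ℝ) * M^2 / φmin) * ((n:ℝ) * φmin * c^2)
            ≤ ((m:ℝ) * M^2 / φmin) * N^2 :=
          mul_le_mul_of_nonneg_left hkey1 (by positivity)
        calc (n:ℝ) * m * M^2 * c^2 = ((m:ℝ) * M^2 / φmin) * ((n:ℝ) * φmin * c^2) := by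
              field_simp
          _ ≤ ((m:ℝ) * M^2 / φmin) * N^2 := h6
          _ = ((m:ℝ)/φmin) * M^2 * N^2 := by ring
      have h7 : N^2 * N^2 ≤ (((m:ℝ)/φmin) * M^2) * N^2 := by
        calc N^2 * N^2 = (N^2)^2 := by ring
          _ ≤ (n:ℝ) * m * M^2 * c^2 := by rw [← hB2]; exact h4
          _ ≤ ((m:ℝ)/φmin) * M^2 * N^2 := h5
      have h8 : N^2 ≤ ((m:ℝ)/φmin) * M^2 :=
        le_of_mul_le_mul_right (by linarith [h7]) (by positivity : (0:ℝ) < N^2)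
      have h9 : N ≤ Real.sqrt (((m:ℝ)/φmin) * M^2) := Real.le_sqrt_of_sq_le h8
      calc N ≤ Real.sqrt (((m:ℝ)/φmin) * M^2) := h9
        _ = Real.sqrt ((m:ℝ)/φmin) * M := by
            rw [Real.sqrt_mul (by positivity), Real.sqrt_sq hMnn]
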